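/- Fix a prime p and an integer e ≥ 1. The set R of formal power series Σ_{i≥0} a_i · t^i/⌊i/e⌋! in ℚ_p[[t]] with all coefficients a_i ∈ ℤ_p is a subring of ℚ_p[[t]]. -/

import Mathlib

open PowerSeries

/-- Fix a prime `p` and an integer `e ≥ 1`. The set of formal power series
`Σ_{i≥0} a_i · t^i/⌊i/e⌋!` in `ℚ_p[[t]]` with all `a_i ∈ ℤ_p` is a subring of
`ℚ_p[[t]]`. -/
theorem stmt_2 (p : ℕ) [Fact p.Prime] (e : ℕ) (he : 1 ≤ e) :
    ∃ S : Subring (PowerSeries ℚ_[p]),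
      (S : Set (PowerSeries ℚ_[p])) =
        {f : PowerSeries ℚ_[p] |
          ∀ i : ℕ, ∃ a : ℤ_[p],
            (PowerSeries.coeff (R := ℚ_[p]) i) f =
              (a : ℚ_[p]) / (Nat.factorial (i / e) : ℚ_[p])} := by
  classical
  refine ⟨{ carrier := {f : PowerSeries ℚ_[p] |
              ∀ i : ℕ, ∃ a : ℤ_[p],
                (PowerSeries.coeff (R := ℚ_[p]) i) f =
                  (a : ℚ_[p]) / (Nat.factorial (i / e) : ℚ_[p])}
            zero_mem' := ?_
            one_mem' := ?_
            add_mem' := ?_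
            neg_mem' := ?_
            mul_mem' := ?_ }, rfl⟩
  · intro f g hf hg n
    choose A hA using hf
    choose B hB using hg
    refine ⟨∑ q ∈ Finset.HasAntidiagonal.antidiagonal n,
      A q.1 * B q.2 *
        (((Nat.factorial (n / e)) /
          ((Nat.factorial (q.1 / e)) * (Nat.factorial (q.2 / e))) : ℕ) : ℤ_[p]), ?_⟩
    have hfac : ((Nat.factorial (n / e) : ℚ_[p])) ≠ 0 :=
      Nat.cast_ne_zero.2 (Nat.factorial_ne_zero _)
    have hcoe : ((∑ q ∈ Finset.HasAntidiagonal.antidiagonal n,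
        A q.1 * B q.2 *
          (((Nat.factorial (n / e)) /
            ((Nat.factorial (q.1 / e)) * (Nat.factorial (q.2 / e))) : ℕ) : ℤ_[p]) :
        ℤ_[p]) : ℚ_[p]) =
        ∑ q ∈ Finset.HasAntidiagonal.antidiagonal n,
          ((A q.1 : ℚ_[p]) * (B q.2 : ℚ_[p]) *
            (((Nat.factorial (n / e)) /
              ((Nat.factorial (q.1 / e)) * (Nat.factorial (q.2 / e))) : ℕ) : ℚ_[p])) := by
      rw [show ((↑) : ℤ_[p] → ℚ_[p]) = (PadicInt.Coe.ringHom (p := p) : ℤ_[p] → ℚ_[p]) from rfl,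
        map_sum]
      push_cast
      rfl
    rw [eq_div_iff hfac, PowerSeries.coeff_mul, Finset.sum_mul, hcoe]
    refine Finset.sum_congr rfl fun q hq => ?_
    have hqn : q.1 + q.2 = n := Finset.HasAntidiagonal.mem_antidiagonal.mp hq
    have hdvd : Nat.factorial (q.1 / e) * Nat.factorial (q.2 / e) ∣
        Nat.factorial (n / e) := by
      refine dvd_trans (Nat.factorial_mul_factorial_dvd_factorial_add _ _)
        (Nat.factorial_dvd_factorial ?_)
      rw [← hqn]
      exact Nat.add_div_le_add_div _ _ _
    have hd : (Nat.factorial (n / e)) /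
        (Nat.factorial (q.1 / e) * Nat.factorial (q.2 / e)) *
        (Nat.factorial (q.1 / e) * Nat.factorial (q.2 / e)) =
        Nat.factorial (n / e) := Nat.div_mul_cancel hdvd
    have hd' : ((Nat.factorial (n / e) /
        (Nat.factorial (q.1 / e) * Nat.factorial (q.2 / e)) : ℕ) : ℚ_[p]) *
        ((Nat.factorial (q.1 / e) : ℚ_[p]) * (Nat.factorial (q.2 / e) : ℚ_[p])) =
        (Nat.factorial (n / e) : ℚ_[p]) := by
      exact_mod_cast congrArg (Nat.cast : ℕ → ℚ_[p]) hd
    have h1 : ((Nat.factorial (q.1 / e) : ℚ_[p])) ≠ 0 :=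
      Nat.cast_ne_zero.2 (Nat.factorial_ne_zero _)
    have h2 : ((Nat.factorial (q.2 / e) : ℚ_[p])) ≠ 0 :=
      Nat.cast_ne_zero.2 (Nat.factorial_ne_zero _)
    rw [hA, hB, ← hd']
    field_simp
  · intro i
    rcases Nat.eq_zero_or_pos i with h | h
    · subst h
      exact ⟨1, by simp⟩
    · refine ⟨0, ?_⟩
      simp [PowerSeries.coeff_one, h.ne']
  · intro f g hf hg i
    obtain ⟨a, ha⟩ := hf i
    obtain ⟨b, hb⟩ := hg i
    refine ⟨a + b, ?_⟩
    rw [map_add, ha, hb]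
    push_cast
    rw [← add_div]
  · intro i
    exact ⟨0, by simp⟩
  · intro f hf i
    obtain ⟨a, ha⟩ := hf i
    refine ⟨-a, ?_⟩
    rw [map_neg, ha]
    push_cast
    rw [neg_div]
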